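/- The lattice Z of cyclic flats of a q-matroid (E,r) satisfies: (Z1) r(0_Z) = 0 where 0_Z = cl(0); (Z2) for F, G ∈ Z with G < F, 0 < r(F) - r(G) < dim(F) - dim(G); (Z3) for all F, G ∈ Z, r(F) + r(G) ≥ r(F ∨ G) + r(F ∧ G) + dim((F∩G)/(F∧G)). -/
import Mathlib


open Module Submodule

variable {K E : Type*} [Field K] [Fintype K] [AddCommGroup E] [Module K E]
  [FiniteDimensional K E]

/-- The dimension of a subspace, as an integer. -/
noncomputable def dimz {K E : Type*} [Field K] [AddCommGroup E] [Module K E]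
    (A : Submodule K E) : ℤ :=
  (Module.finrank K ↥A : ℤ)

/-- `r` is the rank function of a `q`-matroid on `E`: axioms (R1)-(R3). -/
def QMat {K E : Type*} [Field K] [AddCommGroup E] [Module K E]
    (r : Submodule K E → ℤ) : Prop :=
  (∀ A : Submodule K E, 0 ≤ r A ∧ r A ≤ dimz A) ∧
  (∀ A B : Submodule K E, A ≤ B → r A ≤ r B) ∧
  (∀ A B : Submodule K E, r (A ⊔ B) + r (A ⊓ B) ≤ r A + r B)

/-- A subspace is cyclic: every codimension-1 subspace has the same rank. -/
def QCyclic {K E : Type*} [Field K] [AddCommGroup E] [Module K E]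
    (r : Submodule K E → ℤ) (A : Submodule K E) : Prop :=
  ∀ B ≤ A, Module.finrank K ↥A = Module.finrank K ↥B + 1 → r B = r A

/-- The cyclic operator: sum of all one-dimensional `x ≤ A` with
`r (B ⊔ x) = r B` for all codimension-1 subspaces `B` of `A`. -/
noncomputable def qcyc {K E : Type*} [Field K] [AddCommGroup E] [Module K E]
    (r : Submodule K E → ℤ) (A : Submodule K E) : Submodule K E :=
  sSup {x : Submodule K E | x ≤ A ∧ Module.finrank K ↥x = 1 ∧
    ∀ B ≤ A, Module.finrank K ↥A = Module.finrank K ↥B + 1 → r (B ⊔ x) = r B}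

/-- The closure operator: sum of all one-dimensional `x` with `r (A ⊔ x) = r A`. -/
noncomputable def qcl {K E : Type*} [Field K] [AddCommGroup E] [Module K E]
    (r : Submodule K E → ℤ) (A : Submodule K E) : Submodule K E :=
  sSup {x : Submodule K E | Module.finrank K ↥x = 1 ∧ r (A ⊔ x) = r A}

/-- A subspace `F` is a flat: adding any one-dimensional space outside `F`
increases the rank. -/
def QFlat {K E : Type*} [Field K] [AddCommGroup E] [Module K E]
    (r : Submodule K E → ℤ) (F : Submodule K E) : Prop :=
  ∀ x : Submodule K E, Module.finrank K ↥x = 1 → ¬ x ≤ F → r F < r (F ⊔ x)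

/-! ### Auxiliary lemmas -/

/-- Find a line inside `B` not inside `A`. -/
lemma exists_line_of_not_le {A B : Submodule K E} (h : ¬ B ≤ A) :
    ∃ x : Submodule K E, x ≤ B ∧ Module.finrank K ↥x = 1 ∧ ¬ x ≤ A := by
  obtain ⟨b, hbB, hbA⟩ := SetLike.not_le_iff_exists.mp h
  have hb0 : b ≠ 0 := fun h0 => hbA (h0 ▸ A.zero_mem)
  refine ⟨Submodule.span K {b}, ?_, finrank_span_singleton hb0,
    fun hle => hbA (hle (Submodule.mem_span_singleton_self b))⟩
  exact (Submodule.span_singleton_le_iff_mem b B).mpr hbB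

lemma line_inf_eq_bot {A x : Submodule K E} (hx : Module.finrank K ↥x = 1)
    (hxA : ¬ x ≤ A) : A ⊓ x = ⊥ := by
  by_contra hne
  have h0 : Module.finrank K ↥(A ⊓ x) ≠ 0 :=
    fun h => hne (Submodule.finrank_eq_zero.mp h)
  have heq : A ⊓ x = x :=
    eq_of_le_of_finrank_le inf_le_right (by omega)
  exact hxA (heq ▸ (inf_le_left : A ⊓ x ≤ A))

lemma finrank_sup_line {B x : Submodule K E} (hx : Module.finrank K ↥x = 1)
    (hxB : ¬ x ≤ B) : Module.finrank K ↥(B ⊔ x) = Module.finrank K ↥B + 1 := by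
  have h := Submodule.finrank_sup_add_finrank_inf_eq B x
  rw [line_inf_eq_bot hx hxB] at h
  rw [finrank_bot] at h
  omega

/-- Key lemma: adding a sSup of rank-preserving pieces preserves rank. -/
lemma rank_sup_sSup (r : Submodule K E → ℤ) (hM : QMat r) :
    ∀ (n : ℕ) (A : Submodule K E) (S : Set (Submodule K E)),
      Module.finrank K E ≤ Module.finrank K ↥A + n →
      (∀ x ∈ S, r (A ⊔ x) = r A) → r (A ⊔ sSup S) = r A := by
  intro n
  induction n with
  | zero =>
    intro A S hn _
    have hA : A = ⊤ := Submodule.eq_top_of_finrank_eq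
      (le_antisymm (Submodule.finrank_le A) (by simpa using hn))
    simp [hA]
  | succ n ih =>
    intro A S hn hS
    by_cases hle : sSup S ≤ A
    · rw [sup_eq_left.mpr hle]
    · obtain ⟨x, hxS, hxA⟩ : ∃ x ∈ S, ¬ x ≤ A := by
        by_contra h
        push_neg at h
        exact hle (sSup_le h)
      have hrx : r (A ⊔ x) = r A := hS x hxS
      have hlt : Module.finrank K ↥A < Module.finrank K ↥(A ⊔ x) :=
        Submodule.finrank_lt_finrank_of_lt (left_lt_sup.mpr hxA)
      have hS' : ∀ y ∈ S, r ((A ⊔ x) ⊔ y) = r (A ⊔ x) := by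
        intro y hyS
        have hry : r (A ⊔ y) = r A := hS y hyS
        have hsub := hM.2.2 (A ⊔ x) (A ⊔ y)
        have hsup : (A ⊔ x) ⊔ (A ⊔ y) = (A ⊔ x) ⊔ y := by
          rw [sup_sup_sup_comm, sup_idem, sup_assoc]
        rw [hsup, hrx, hry] at hsub
        have hinf : r A ≤ r ((A ⊔ x) ⊓ (A ⊔ y)) :=
          hM.2.1 _ _ (le_inf le_sup_left le_sup_left)
        have hmono : r (A ⊔ x) ≤ r ((A ⊔ x) ⊔ y) := hM.2.1 _ _ le_sup_left
        omega
      have hkey := ih (A ⊔ x) S (by omega) hS'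
      have hsup2 : (A ⊔ x) ⊔ sSup S = A ⊔ sSup S := by
        rw [sup_assoc, sup_eq_right.mpr (le_sSup hxS)]
      rw [hsup2] at hkey
      rw [hkey, hrx]

lemma le_qcl (r : Submodule K E → ℤ) (A : Submodule K E) : A ≤ qcl r A := by
  intro a ha
  by_cases h0 : a = 0
  · simp [h0]
  · have hmem : Submodule.span K {a} ∈
        {x : Submodule K E | Module.finrank K ↥x = 1 ∧ r (A ⊔ x) = r A} := by
      refine ⟨finrank_span_singleton h0, ?_⟩
      rw [sup_eq_left.mpr ((Submodule.span_singleton_le_iff_mem a A).mpr ha)]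
    exact le_sSup hmem (Submodule.mem_span_singleton_self a)

lemma rank_qcl (r : Submodule K E → ℤ) (hM : QMat r) (A : Submodule K E) :
    r (qcl r A) = r A := by
  have h := rank_sup_sSup r hM (Module.finrank K E) A
    {x : Submodule K E | Module.finrank K ↥x = 1 ∧ r (A ⊔ x) = r A}
    (Nat.le_add_left _ _) (fun x hx => hx.2)
  rwa [show A ⊔ sSup {x : Submodule K E |
      Module.finrank K ↥x = 1 ∧ r (A ⊔ x) = r A} = qcl r A from
    sup_eq_right.mpr (le_qcl r A)] at h

/-- Rank increases by at most the dimension increase. -/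
lemma rank_diff_le_dim_diff (r : Submodule K E → ℤ) (hM : QMat r) :
    ∀ (n : ℕ) (A B : Submodule K E), A ≤ B →
      Module.finrank K ↥B ≤ Module.finrank K ↥A + n →
      r B + (Module.finrank K ↥A : ℤ) ≤ r A + (Module.finrank K ↥B : ℤ) := by
  intro n
  induction n with
  | zero =>
    intro A B hAB hn
    have : A = B := eq_of_le_of_finrank_le hAB (by omega)
    rw [this]
  | succ n ih =>
    intro A B hAB hn
    by_cases hBA : B ≤ A
    · rw [le_antisymm hAB hBA]
    · obtain ⟨x, hxB, hx1, hxA⟩ := exists_line_of_not_le hBA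
      have hA' : A ⊔ x ≤ B := sup_le hAB hxB
      have hdim : Module.finrank K ↥(A ⊔ x) = Module.finrank K ↥A + 1 :=
        finrank_sup_line hx1 hxA
      have hsub := hM.2.2 A x
      have hrx : r x ≤ 1 := by
        have := (hM.1 x).2
        simpa [dimz, hx1] using this
      have hinf : 0 ≤ r (A ⊓ x) := (hM.1 _).1
      have hstep : r (A ⊔ x) ≤ r A + 1 := by omega
      have := ih (A ⊔ x) B hA' (by omega)
      rw [hdim] at this
      push_cast at this ⊢
      omega

/-- Between `G < F` there is a codimension-1 (in `F`) subspace containing `G`. -/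
lemma exists_codim_one_between (r : Submodule K E → ℤ) :
    ∀ (n : ℕ) (G F : Submodule K E), G ≤ F →
      Module.finrank K ↥F = Module.finrank K ↥G + n + 1 →
      ∃ B, G ≤ B ∧ B ≤ F ∧ Module.finrank K ↥F = Module.finrank K ↥B + 1 := by
  intro n
  induction n with
  | zero => exact fun G F hGF hn => ⟨G, le_refl G, hGF, hn⟩
  | succ n ih =>
    intro G F hGF hn
    have hFG : ¬ F ≤ G := by
      intro h
      have := Submodule.finrank_mono h
      omega
    obtain ⟨x, hxF, hx1, hxG⟩ := exists_line_of_not_le hFG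
    have hdim : Module.finrank K ↥(G ⊔ x) = Module.finrank K ↥G + 1 :=
      finrank_sup_line hx1 hxG
    obtain ⟨B, h1, h2, h3⟩ := ih (G ⊔ x) F (sup_le hGF hxF) (by omega)
    exact ⟨B, le_trans le_sup_left h1, h2, h3⟩

lemma qcyc_le (r : Submodule K E → ℤ) (A : Submodule K E) : qcyc r A ≤ A :=
  sSup_le fun _ hx => hx.1

/-- `qcyc r A` is contained in every "bad" codimension-1 subspace of `A`. -/
lemma qcyc_le_bad (r : Submodule K E → ℤ) (hM : QMat r) {A B : Submodule K E}
    (hBA : B ≤ A) (hdim : Module.finrank K ↥A = Module.finrank K ↥B + 1)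
    (hbad : r B < r A) : qcyc r A ≤ B := by
  refine sSup_le fun x hx => ?_
  by_contra hxB
  have hr := hx.2.2 B hBA hdim
  have hBx : B ⊔ x = A := by
    have h1 : Module.finrank K ↥(B ⊔ x) = Module.finrank K ↥B + 1 :=
      finrank_sup_line hx.2.1 hxB
    exact eq_of_le_of_finrank_le (sup_le hBA hx.1) (by omega)
  rw [hBx] at hr
  omega

/-- Main inequality for the cyclic core. -/
lemma qcyc_rank_ineq (r : Submodule K E → ℤ) (hM : QMat r) (A : Submodule K E) :
    ∀ (n : ℕ) (D : Submodule K E), qcyc r A ≤ D → D ≤ A →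
      Module.finrank K ↥D ≤ Module.finrank K ↥(qcyc r A) + n →
      r (qcyc r A) + ((Module.finrank K ↥D : ℤ) -
        (Module.finrank K ↥(qcyc r A) : ℤ)) ≤ r D := by
  intro n
  induction n with
  | zero =>
    intro D hCD hDA hn
    have : qcyc r A = D := eq_of_le_of_finrank_le hCD (by omega)
    rw [this]
    omega
  | succ n ih =>
    intro D hCD hDA hn
    by_cases hDC : D ≤ qcyc r A
    · rw [le_antisymm hDC hCD]
      omega
    · -- find a bad codim-1 subspace B of A with ¬ D ≤ B
      obtain ⟨B, hBA, hBdim, hBbad, hDB⟩ :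
          ∃ B, B ≤ A ∧ Module.finrank K ↥A = Module.finrank K ↥B + 1 ∧
            r B < r A ∧ ¬ D ≤ B := by
        by_contra h
        push_neg at h
        apply hDC
        intro d hd
        by_cases hd0 : d = 0
        · simp [hd0]
        · have hspan : Submodule.span K {d} ∈
              {x : Submodule K E | x ≤ A ∧ Module.finrank K ↥x = 1 ∧
                ∀ B ≤ A, Module.finrank K ↥A = Module.finrank K ↥B + 1 →
                  r (B ⊔ x) = r B} := by
            refine ⟨le_trans ((Submodule.span_singleton_le_iff_mem d D).mpr hd) hDA,
              finrank_span_singleton hd0, ?_⟩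
            intro B hBA hBdim
            by_cases hdB : d ∈ B
            · rw [sup_eq_left.mpr ((Submodule.span_singleton_le_iff_mem d B).mpr hdB)]
            · have hxB : ¬ Submodule.span K {d} ≤ B := fun hle =>
                hdB (hle (Submodule.mem_span_singleton_self d))
              have hsup : B ⊔ Submodule.span K {d} = A := by
                have h1 : Module.finrank K ↥(B ⊔ Submodule.span K {d}) =
                    Module.finrank K ↥B + 1 :=
                  finrank_sup_line (finrank_span_singleton hd0) hxB
                refine eq_of_le_of_finrank_le
                  (sup_le hBA (le_trans
                    ((Submodule.span_singleton_le_iff_mem d D).mpr hd) hDA))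
                  (by omega)
              have hBnotbad : ¬ r B < r A := by
                intro hbad
                exact hdB (h B hBA hBdim hbad hd)
              have hBle : r B ≤ r A := hM.2.1 _ _ hBA
              rw [hsup]
              omega
          exact le_sSup hspan (Submodule.mem_span_singleton_self d)
      -- D' = D ⊓ B
      have hCB : qcyc r A ≤ B := qcyc_le_bad r hM hBA hBdim hBbad
      have hCD' : qcyc r A ≤ D ⊓ B := le_inf hCD hCB
      have hDBsup : D ⊔ B = A := by
        have hBlt : B < D ⊔ B := lt_of_le_of_ne le_sup_right
          (fun h => hDB (h ▸ (le_sup_left : D ≤ D ⊔ B)))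
        have h1 : Module.finrank K ↥B < Module.finrank K ↥(D ⊔ B) :=
          Submodule.finrank_lt_finrank_of_lt hBlt
        exact eq_of_le_of_finrank_le (sup_le hDA hBA) (by omega)
      have hdims := Submodule.finrank_sup_add_finrank_inf_eq D B
      rw [hDBsup] at hdims
      -- finrank (D ⊓ B) + 1 = finrank D
      have hDdim : Module.finrank K ↥(D ⊓ B) + 1 = Module.finrank K ↥D := by omega
      have hsub := hM.2.2 D B
      rw [hDBsup] at hsub
      have hr' : r (D ⊓ B) ≤ r D - 1 := by omega
      have := ih (D ⊓ B) hCD' (le_trans inf_le_left hDA) (by omega)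
      push_cast at this ⊢
      omega

/-- the lattice of cyclic flats satisfies (Z1)-(Z3). -/
theorem cyclic_flats_Z_axioms (r : Submodule K E → ℤ) (hM : QMat r) :
    r (qcl r ⊥) = 0 ∧
    (∀ F G : Submodule K E, QFlat r F → QCyclic r F → QFlat r G → QCyclic r G →
      G < F → 0 < r F - r G ∧ r F - r G < dimz F - dimz G) ∧
    (∀ F G : Submodule K E, QFlat r F → QCyclic r F → QFlat r G → QCyclic r G →
      r (qcl r (F ⊔ G)) + r (qcyc r (F ⊓ G)) +
        (dimz (F ⊓ G) - dimz (qcyc r (F ⊓ G))) ≤ r F + r G) := by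
  refine ⟨?_, ?_, ?_⟩
  · -- (Z1)
    have hbot : r ⊥ = 0 := by
      have h1 := hM.1 (⊥ : Submodule K E)
      have : dimz (⊥ : Submodule K E) = 0 := by simp [dimz, finrank_bot]
      omega
    rw [rank_qcl r hM ⊥, hbot]
  · -- (Z2)
    intro F G hFflat hFcyc hGflat hGcyc hGF
    constructor
    · obtain ⟨x, hxF, hx1, hxG⟩ := exists_line_of_not_le hGF.not_ge
      have h1 := hGflat x hx1 hxG
      have h2 : r (G ⊔ x) ≤ r F := hM.2.1 _ _ (sup_le hGF.le hxF)
      omega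
    · have hdimlt : Module.finrank K ↥G < Module.finrank K ↥F :=
        Submodule.finrank_lt_finrank_of_lt hGF
      obtain ⟨B, hGB, hBF, hBdim⟩ := exists_codim_one_between r
        (Module.finrank K ↥F - Module.finrank K ↥G - 1) G F hGF.le (by omega)
      have hrB : r B = r F := hFcyc B hBF hBdim
      have hle := rank_diff_le_dim_diff r hM (Module.finrank K ↥B) G B hGB
        (Nat.le_add_left _ _)
      simp only [dimz]
      rw [← hrB]
      push_cast at hle ⊢
      omega
  · -- (Z3)
    intro F G _ _ _ _
    have h1 : r (qcl r (F ⊔ G)) = r (F ⊔ G) := rank_qcl r hM (F ⊔ G)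
    have h2 := qcyc_rank_ineq r hM (F ⊓ G) (Module.finrank K ↥(F ⊓ G)) (F ⊓ G)
      (qcyc_le r (F ⊓ G)) (le_refl _) (Nat.le_add_left _ _)
    have h3 := hM.2.2 F G
    simp only [dimz]
    omega
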